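/- Let δ_0(t,w) be non-decreasing in t for each w, and m(t,w) a function with w ↦ δ_0(t,w) and w ↦ m(t,w) uniformly Lipschitz and satisfying the convexity property m(t,w) ≤ δ_0(t_2,w) − δ_0(t_1,w) + m(t_1,w) + m(t_2,w) for t_1 ≤ t ≤ t_2. For T > 0 define ρ_T(t,w) = sup over −T ≤ s ≤ t of ( δ_0(s,w) − δ_0(t,w) + (1/(2T))∫_s^t m(r,w) dr − m(s,w) ) for |t| ≤ T. Then: (i) |ρ_T(t,w)| ≤ m(t,w) for |t| ≤ T, (ii) w ↦ ρ_T(t,w) is uniformly Lipschitz, and (iii) t ↦ δ_0(t,w) + ρ_T(t,w) has distributional derivative ≥ m(t,w)/(2T) on (−T, T). -/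

import Mathlib

open MeasureTheory

private lemma csSup_image_add_const {A : Set ℝ} {f : ℝ → ℝ} (hA : A.Nonempty)
    (hb : BddAbove (f '' A)) (c : ℝ) :
    sSup ((fun s => f s + c) '' A) = sSup (f '' A) + c := by
  obtain ⟨B, hB⟩ := hb
  have hb' : BddAbove ((fun s => f s + c) '' A) := by
    refine ⟨B + c, ?_⟩
    rintro x ⟨s, hs, rfl⟩
    exact add_le_add_left (hB ⟨s, hs, rfl⟩) c
  apply le_antisymm
  · apply csSup_le (hA.image _)
    rintro x ⟨s, hs, rfl⟩
    exact add_le_add_left (le_csSup ⟨B, hB⟩ ⟨s, hs, rfl⟩) c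
  · have : sSup (f '' A) ≤ sSup ((fun s => f s + c) '' A) - c := by
      apply csSup_le (hA.image _)
      rintro x ⟨s, hs, rfl⟩
      exact le_sub_iff_add_le.mpr (le_csSup hb' ⟨s, hs, rfl⟩)
    linarith

theorem pseudo_sign_construction {X : Type*} [MetricSpace X]
    (δ₀ m : ℝ → X → ℝ) (T : ℝ) (hT : 0 < T) (L : NNReal)
    (hδLip : ∀ t, LipschitzWith L fun w => δ₀ t w)
    (hmLip : ∀ t, LipschitzWith L fun w => m t w)
    (hmono : ∀ w, Monotone fun t => δ₀ t w)
    (hm0 : ∀ t w, 0 ≤ m t w)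
    (C : ℝ) (hmbd : ∀ t w, m t w ≤ C)
    (hint : ∀ (w : X) (s t : ℝ), IntervalIntegrable (fun r => m r w) volume s t)
    (hconv : ∀ w, ∀ t₁ t t₂ : ℝ, t₁ ≤ t → t ≤ t₂ →
      m t w ≤ δ₀ t₂ w - δ₀ t₁ w + m t₁ w + m t₂ w)
    (ρ : ℝ → X → ℝ)
    (hρ : ∀ t w, |t| ≤ T → ρ t w =
      sSup ((fun s => δ₀ s w - δ₀ t w + (1 / (2 * T)) * (∫ r in s..t, m r w) - m s w) ''
        Set.Icc (-T) t)) :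
    (∀ t w, |t| ≤ T → |ρ t w| ≤ m t w) ∧
    (∃ L' : NNReal, ∀ t, |t| ≤ T → LipschitzWith L' fun w => ρ t w) ∧
    (∀ w : X, MonotoneOn
      (fun t => δ₀ t w + ρ t w - (1 / (2 * T)) * ∫ r in (0:ℝ)..t, m r w)
      (Set.Icc (-T) T)) := by
  have h2T : (0:ℝ) < 2 * T := by linarith
  set F : ℝ → X → ℝ → ℝ := fun t w s =>
    δ₀ s w - δ₀ t w + (1 / (2 * T)) * (∫ r in s..t, m r w) - m s w with hF
  have hmem : ∀ t : ℝ, |t| ≤ T → t ∈ Set.Icc (-T) t := by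
    intro t ht
    exact ⟨(abs_le.mp ht).1, le_refl t⟩
  have key : ∀ t w, |t| ≤ T → ∀ s ∈ Set.Icc (-T) t, F t w s ≤ m t w := by
    intro t w ht s hs
    obtain ⟨hs1, hs2⟩ := hs
    have ht1 := (abs_le.mp ht).1
    have ht2 := (abs_le.mp ht).2
    set K : ℝ := δ₀ t w - δ₀ s w + m s w + m t w with hK
    have h1 : δ₀ s w ≤ δ₀ t w := hmono w hs2
    have h2 := hm0 s w
    have h3 := hm0 t w
    have hKnn : 0 ≤ K := by simp only [hK]; linarith
    have hI : (∫ r in s..t, m r w) ≤ (t - s) * K := by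
      have h : (∫ r in s..t, m r w) ≤ ∫ r in s..t, K := by
        apply intervalIntegral.integral_mono_on hs2 (hint w s t) intervalIntegrable_const
        intro r hr
        exact hconv w s r t hr.1 hr.2
      rwa [intervalIntegral.integral_const, smul_eq_mul] at h
    have hfrac : (1 / (2 * T)) * ((t - s) * K) ≤ K := by
      have hts : t - s ≤ 2 * T := by linarith
      rw [div_mul_eq_mul_div, one_mul, div_le_iff₀ h2T]
      nlinarith
    have hmul : (1 / (2 * T)) * (∫ r in s..t, m r w) ≤ (1 / (2 * T)) * ((t - s) * K) :=
      mul_le_mul_of_nonneg_left hI (by positivity)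
    simp only [hF]
    simp only [hK] at hfrac
    linarith
  have hne : ∀ t w, |t| ≤ T → (F t w '' Set.Icc (-T) t).Nonempty := by
    intro t w ht
    exact ⟨F t w t, t, hmem t ht, rfl⟩
  have hbdd : ∀ t w, |t| ≤ T → BddAbove (F t w '' Set.Icc (-T) t) := by
    intro t w ht
    refine ⟨m t w, ?_⟩
    rintro x ⟨s, hs, rfl⟩
    exact key t w ht s hs
  have hFt : ∀ t w, F t w t = -(m t w) := by
    intro t w
    simp [hF]
  refine ⟨?_, ?_, ?_⟩
  · -- part (i)
    intro t w ht
    rw [abs_le, hρ t w ht]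
    constructor
    · have := le_csSup (hbdd t w ht) (Set.mem_image_of_mem (F t w) (hmem t ht))
      rw [hFt t w] at this
      linarith
    · apply csSup_le (hne t w ht)
      rintro x ⟨s, hs, rfl⟩
      exact key t w ht s hs
  · -- part (ii)
    refine ⟨4 * L, ?_⟩
    intro t ht
    have hFLip : ∀ s ∈ Set.Icc (-T) t, ∀ w w' : X,
        F t w s ≤ F t w' s + (4 * L) * dist w w' := by
      intro s hs w w'
      have hd1 : |δ₀ s w - δ₀ s w'| ≤ L * dist w w' := by
        have := (hδLip s).dist_le_mul w w'
        rwa [Real.dist_eq] at this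
      have hd2 : |δ₀ t w' - δ₀ t w| ≤ L * dist w w' := by
        have := (hδLip t).dist_le_mul w' w
        rwa [Real.dist_eq, dist_comm w' w] at this
      have hd3 : |m s w' - m s w| ≤ L * dist w w' := by
        have := (hmLip s).dist_le_mul w' w
        rwa [Real.dist_eq, dist_comm w' w] at this
      have hdint : |(∫ r in s..t, m r w) - ∫ r in s..t, m r w'| ≤
          (L * dist w w') * (2 * T) := by
        rw [← intervalIntegral.integral_sub (hint w s t) (hint w' s t)]
        have hb : ∀ r ∈ Set.uIoc s t, ‖m r w - m r w'‖ ≤ L * dist w w' := by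
          intro r _
          have := (hmLip r).dist_le_mul w w'
          rwa [Real.dist_eq] at this
        have h := intervalIntegral.norm_integral_le_of_norm_le_const hb
        refine le_trans h ?_
        have hts : |t - s| ≤ 2 * T := by
          have ha := (abs_le.mp ht).1
          have hb' := (abs_le.mp ht).2
          rw [abs_le]
          exact ⟨by linarith [hs.2], by linarith [hs.1]⟩
        exact mul_le_mul_of_nonneg_left hts (by positivity)
      have hdint' : (1 / (2 * T)) * (∫ r in s..t, m r w) ≤
          (1 / (2 * T)) * (∫ r in s..t, m r w') + L * dist w w' := by
        have h1 : (∫ r in s..t, m r w) - (∫ r in s..t, m r w') ≤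
            (L * dist w w') * (2 * T) := le_trans (le_abs_self _) hdint
        have h2 : (1 / (2 * T)) * ((∫ r in s..t, m r w) - ∫ r in s..t, m r w') ≤
            (1 / (2 * T)) * ((L * dist w w') * (2 * T)) :=
          mul_le_mul_of_nonneg_left h1 (by positivity)
        have h3 : (1 / (2 * T)) * ((L * dist w w') * (2 * T)) = L * dist w w' := by
          field_simp
        nlinarith
      have e1 : δ₀ s w - δ₀ s w' ≤ L * dist w w' := le_trans (le_abs_self _) hd1
      have e2 : δ₀ t w' - δ₀ t w ≤ L * dist w w' := le_trans (le_abs_self _) hd2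
      have e3 : m s w' - m s w ≤ L * dist w w' := le_trans (le_abs_self _) hd3
      simp only [hF]
      push_cast
      linarith
    apply LipschitzWith.of_dist_le_mul
    intro w w'
    rw [Real.dist_eq, abs_sub_le_iff]
    constructor
    · rw [hρ t w ht, hρ t w' ht, sub_le_iff_le_add]
      apply csSup_le (hne t w ht)
      rintro x ⟨s, hs, rfl⟩
      calc F t w s ≤ F t w' s + (4 * L) * dist w w' := hFLip s hs w w'
        _ ≤ sSup (F t w' '' Set.Icc (-T) t) + (4 * L) * dist w w' :=
            add_le_add_left (le_csSup (hbdd t w' ht) ⟨s, hs, rfl⟩) _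
        _ = (4 * L) * dist w w' + sSup (F t w' '' Set.Icc (-T) t) := by push_cast; ring
    · rw [hρ t w ht, hρ t w' ht, sub_le_iff_le_add]
      apply csSup_le (hne t w' ht)
      rintro x ⟨s, hs, rfl⟩
      calc F t w' s ≤ F t w s + (4 * L) * dist w' w := hFLip s hs w' w
        _ ≤ sSup (F t w '' Set.Icc (-T) t) + (4 * L) * dist w w' := by
            rw [dist_comm w' w]
            exact add_le_add_left (le_csSup (hbdd t w ht) ⟨s, hs, rfl⟩) _
        _ = (4 * L) * dist w w' + sSup (F t w '' Set.Icc (-T) t) := by push_cast; ring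
  · -- part (iii)
    intro w
    set G : ℝ → ℝ := fun s => δ₀ s w - (1 / (2 * T)) * (∫ r in (0:ℝ)..s, m r w) - m s w
      with hG
    have hGbdd : BddAbove (G '' Set.Icc (-T) T) := by
      refine ⟨δ₀ T w + C / 2, ?_⟩
      rintro x ⟨s, hs, rfl⟩
      have h1 : δ₀ s w ≤ δ₀ T w := hmono w hs.2
      have h2 : ‖∫ r in (0:ℝ)..s, m r w‖ ≤ C * |s - 0| := by
        apply intervalIntegral.norm_integral_le_of_norm_le_const
        intro r hr
        rw [Real.norm_eq_abs, abs_of_nonneg (hm0 r w)]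
        exact hmbd r w
      rw [Real.norm_eq_abs, sub_zero] at h2
      have h3 : |s| ≤ T := abs_le.mpr ⟨hs.1, hs.2⟩
      have hC : 0 ≤ C := le_trans (hm0 0 w) (hmbd 0 w)
      have h4 : -(C * T) ≤ (∫ r in (0:ℝ)..s, m r w) := by
        have h2' := (abs_le.mp h2).1
        nlinarith [abs_nonneg s]
      have h5 : -(C / 2) ≤ (1 / (2 * T)) * (∫ r in (0:ℝ)..s, m r w) := by
        have he : (1 / (2 * T)) * -(C * T) = -(C / 2) := by
          field_simp
        have hm' : (1 / (2 * T)) * -(C * T) ≤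
            (1 / (2 * T)) * (∫ r in (0:ℝ)..s, m r w) :=
          mul_le_mul_of_nonneg_left h4 (by positivity)
        linarith
      have h7 := hm0 s w
      simp only [hG]
      nlinarith
    have hrepr : ∀ t, t ∈ Set.Icc (-T) T →
        δ₀ t w + ρ t w - (1 / (2 * T)) * (∫ r in (0:ℝ)..t, m r w) =
        sSup (G '' Set.Icc (-T) t) := by
      intro t ht
      have ht' : |t| ≤ T := abs_le.mpr ⟨ht.1, ht.2⟩
      set c : ℝ := δ₀ t w - (1 / (2 * T)) * (∫ r in (0:ℝ)..t, m r w) with hc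
      have hfun : G = fun s => F t w s + c := by
        funext s
        have hadd : (∫ r in s..(0:ℝ), m r w) + (∫ r in (0:ℝ)..t, m r w) =
            ∫ r in s..t, m r w :=
          intervalIntegral.integral_add_adjacent_intervals (hint w s 0) (hint w 0 t)
        have hsym : (∫ r in s..(0:ℝ), m r w) = -(∫ r in (0:ℝ)..s, m r w) :=
          intervalIntegral.integral_symm 0 s
        simp only [hG, hF, hc]
        rw [← hadd, hsym]
        ring
      rw [hρ t w ht', hfun, csSup_image_add_const ⟨t, hmem t ht'⟩ (hbdd t w ht') c, hc]
      ring
    intro t₁ ht₁ t₂ ht₂ h12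
    simp only
    rw [hrepr t₁ ht₁, hrepr t₂ ht₂]
    apply csSup_le_csSup
    · exact hGbdd.mono (Set.image_mono (Set.Icc_subset_Icc_right ht₂.2))
    · exact ⟨G t₁, t₁, hmem t₁ (abs_le.mpr ⟨ht₁.1, ht₁.2⟩), rfl⟩
    · exact Set.image_mono (Set.Icc_subset_Icc_right h12)
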